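/- Let d ≥ 1 be an integer, ν ∈ (0,1], and let 𝒜, ℬ be nonempty compact metric spaces. Let a : 𝒜 × ℬ → ℝ^{d×d} and f : 𝒜 × ℬ → ℝ be continuous, and suppose that for every (α,β) the matrix a(α,β) has tr a(α,β) > 0 and satisfies the Cordes condition |a(α,β)|² ≤ (tr a(α,β))²/(d−1+ν). Set γ(α,β) := tr a(α,β)/|a(α,β)|² and, for a real d×d matrix M, define F_γ(M) := inf_{α∈𝒜} sup_{β∈ℬ} [γ(α,β)·(a(α,β):M − f(α,β))]. Then for all real d×d matrices M and N, |F_γ(N) − F_γ(M)| ≤ (1 + √(d+1))·|N − M|. -/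

import Mathlib

private lemma core_ineq (dR T S P Q : ℝ) (hd : 0 ≤ dR) (hT : 0 < T) (hS : 0 < S)
    (hQ : 0 ≤ Q) (hTS : T ^ 2 ≤ dR * S) (hCS : P ^ 2 ≤ S * Q) :
    |T / S * P| ≤ Real.sqrt dR * Real.sqrt Q := by
  have hPabs : |P| ≤ Real.sqrt S * Real.sqrt Q := by
    rw [← Real.sqrt_mul hS.le, ← Real.sqrt_sq_eq_abs]
    exact Real.sqrt_le_sqrt hCS
  have hT' : T ≤ Real.sqrt dR * Real.sqrt S := by
    rw [← Real.sqrt_mul hd]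
    nth_rewrite 1 [show T = Real.sqrt (T ^ 2) from (Real.sqrt_sq hT.le).symm]
    exact Real.sqrt_le_sqrt hTS
  have hsS : Real.sqrt S * Real.sqrt S = S := Real.mul_self_sqrt hS.le
  have hsSpos : 0 < Real.sqrt S := Real.sqrt_pos.2 hS
  rw [abs_mul, abs_of_pos (div_pos hT hS)]
  calc T / S * |P| ≤ T / S * (Real.sqrt S * Real.sqrt Q) :=
        mul_le_mul_of_nonneg_left hPabs (by positivity)
    _ = (T / Real.sqrt S) * Real.sqrt Q := by
        field_simp; linear_combination (Real.sqrt Q) * hsS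
    _ ≤ Real.sqrt dR * Real.sqrt Q := by
        apply mul_le_mul_of_nonneg_right _ (Real.sqrt_nonneg _)
        rw [div_le_iff₀ hsSpos]
        exact hT'

private lemma cs_bound (d : ℕ) (A x : Matrix (Fin d) (Fin d) ℝ)
    (hT : 0 < Matrix.trace A)
    (hS : 0 < ∑ i, ∑ j, (A i j) ^ 2)
    (hTS : (Matrix.trace A) ^ 2 ≤ (d : ℝ) * ∑ i, ∑ j, (A i j) ^ 2) :
    |(Matrix.trace A / (∑ i, ∑ j, (A i j) ^ 2)) * (∑ i, ∑ j, A i j * x i j)|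
      ≤ Real.sqrt d * Real.sqrt (∑ i, ∑ j, (x i j) ^ 2) := by
  have hQnn : (0:ℝ) ≤ ∑ i, ∑ j, (x i j) ^ 2 := by positivity
  have hCS : (∑ i, ∑ j, A i j * x i j) ^ 2
      ≤ (∑ i, ∑ j, (A i j) ^ 2) * ∑ i, ∑ j, (x i j) ^ 2 := by
    have h1 : ∑ i, ∑ j, A i j * x i j
        = ∑ p ∈ (Finset.univ ×ˢ Finset.univ : Finset (Fin d × Fin d)),
            A p.1 p.2 * x p.1 p.2 := by rw [Finset.sum_product]
    have h2 : ∑ i, ∑ j, (A i j) ^ 2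
        = ∑ p ∈ (Finset.univ ×ˢ Finset.univ : Finset (Fin d × Fin d)),
            (A p.1 p.2) ^ 2 := by rw [Finset.sum_product]
    have h3 : ∑ i, ∑ j, (x i j) ^ 2
        = ∑ p ∈ (Finset.univ ×ˢ Finset.univ : Finset (Fin d × Fin d)),
            (x p.1 p.2) ^ 2 := by rw [Finset.sum_product]
    rw [h1, h2, h3]
    exact Finset.sum_mul_sq_le_sq_mul_sq _ _ _
  exact core_ineq _ _ _ _ _ (Nat.cast_nonneg d) hT hS hQnn hTS hCS

private lemma ciInf_ciSup_le_add {ι κ : Type*} [Nonempty ι] [Nonempty κ]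
    (u v : ι → κ → ℝ) (L : ℝ)
    (hu_lb : ∃ c, ∀ i k, c ≤ u i k)
    (hu_ub : ∃ C, ∀ i k, u i k ≤ C)
    (hv_ub : ∃ C, ∀ i k, v i k ≤ C)
    (h : ∀ i k, u i k ≤ v i k + L) :
    (⨅ i, ⨆ k, u i k) ≤ (⨅ i, ⨆ k, v i k) + L := by
  obtain ⟨c, hc⟩ := hu_lb
  obtain ⟨Cu, hCu⟩ := hu_ub
  obtain ⟨Cv, hCv⟩ := hv_ub
  have hbu : ∀ i, BddAbove (Set.range (u i)) := by
    intro i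
    refine ⟨Cu, ?_⟩
    rintro y ⟨k, rfl⟩
    exact hCu i k
  have hbv : ∀ i, BddAbove (Set.range (v i)) := by
    intro i
    refine ⟨Cv, ?_⟩
    rintro y ⟨k, rfl⟩
    exact hCv i k
  have hbb : BddBelow (Set.range fun i => ⨆ k, u i k) := by
    refine ⟨c, ?_⟩
    rintro y ⟨i, rfl⟩
    exact le_trans (hc i (Classical.arbitrary κ)) (le_ciSup (hbu i) (Classical.arbitrary κ))
  rw [← sub_le_iff_le_add]
  apply le_ciInf
  intro i
  rw [sub_le_iff_le_add]
  calc (⨅ i, ⨆ k, u i k) ≤ ⨆ k, u i k := ciInf_le hbb i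
    _ ≤ (⨆ k, v i k) + L :=
        ciSup_le fun k => (h i k).trans (add_le_add_left (le_ciSup (hbv i) k) L)

private noncomputable def Gfun {𝒜 ℬ : Type*} (d : ℕ) (a : 𝒜 → ℬ → Matrix (Fin d) (Fin d) ℝ)
    (f : 𝒜 → ℬ → ℝ) (M : Matrix (Fin d) (Fin d) ℝ) (α : 𝒜) (β : ℬ) : ℝ :=
  (Matrix.trace (a α β) / (∑ i, ∑ j, (a α β i j) ^ 2)) *
    ((∑ i, ∑ j, a α β i j * M i j) - f α β)



/-- **Pointwise Lipschitz bound for the renormalized Isaacs operator.**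
Let `d ≥ 1`, `ν ∈ (0,1]`, and let `𝒜`, `ℬ` be nonempty compact metric spaces. Let
`a : 𝒜 × ℬ → ℝ^{d×d}` and `f : 𝒜 × ℬ → ℝ` be continuous, with each `a(α,β)` having
positive trace and satisfying the Cordes condition `|a(α,β)|² ≤ (tr a(α,β))²/(d−1+ν)`.
With `γ(α,β) := tr a(α,β)/|a(α,β)|²` and
`F_γ(M) := inf_α sup_β [γ(α,β)·(a(α,β):M − f(α,β))]`, we have for all matrices `M`, `N`:
`|F_γ(N) − F_γ(M)| ≤ (1 + √(d+1))·|N − M|` (Frobenius norm). -/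
theorem lipschitz_estimate_isaacs (d : ℕ) (hd : 1 ≤ d) (ν : ℝ) (hν0 : 0 < ν) (hν1 : ν ≤ 1)
    {𝒜 ℬ : Type*} [MetricSpace 𝒜] [CompactSpace 𝒜] [Nonempty 𝒜]
    [MetricSpace ℬ] [CompactSpace ℬ] [Nonempty ℬ]
    (a : 𝒜 → ℬ → Matrix (Fin d) (Fin d) ℝ) (f : 𝒜 → ℬ → ℝ)
    (ha : Continuous fun p : 𝒜 × ℬ => a p.1 p.2)
    (hf : Continuous fun p : 𝒜 × ℬ => f p.1 p.2)
    (htr : ∀ α β, 0 < Matrix.trace (a α β))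
    (hcordes : ∀ α β,
      (∑ i, ∑ j, (a α β i j) ^ 2) ≤ (Matrix.trace (a α β)) ^ 2 / ((d : ℝ) - 1 + ν))
    (Fγ : Matrix (Fin d) (Fin d) ℝ → ℝ)
    (hFγ : ∀ M, Fγ M = ⨅ α : 𝒜, ⨆ β : ℬ,
      (Matrix.trace (a α β) / (∑ i, ∑ j, (a α β i j) ^ 2)) *
        ((∑ i, ∑ j, a α β i j * M i j) - f α β)) :
    ∀ M N : Matrix (Fin d) (Fin d) ℝ,
      |Fγ N - Fγ M|
        ≤ (1 + Real.sqrt ((d : ℝ) + 1)) * Real.sqrt (∑ i, ∑ j, ((N - M) i j) ^ 2) := by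
  -- trace-squared bound
  have hTS : ∀ α β, (Matrix.trace (a α β)) ^ 2 ≤ (d : ℝ) * ∑ i, ∑ j, (a α β i j) ^ 2 := by
    intro α β
    have h1 : Matrix.trace (a α β) = ∑ i, a α β i i := rfl
    have h2 : (∑ i, a α β i i) ^ 2
        ≤ ((Finset.univ : Finset (Fin d)).card : ℝ) * ∑ i, (a α β i i) ^ 2 :=
      sq_sum_le_card_mul_sum_sq
    have h3 : ∑ i, (a α β i i) ^ 2 ≤ ∑ i, ∑ j, (a α β i j) ^ 2 :=
      Finset.sum_le_sum fun i _ =>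
        Finset.single_le_sum (f := fun j => (a α β i j) ^ 2) (fun j _ => sq_nonneg _) (Finset.mem_univ i)
    have hcard : ((Finset.univ : Finset (Fin d)).card : ℝ) = (d : ℝ) := by
      simp
    rw [h1]
    calc (∑ i, a α β i i) ^ 2 ≤ (d : ℝ) * ∑ i, (a α β i i) ^ 2 := by
          rw [← hcard]; exact h2
      _ ≤ (d : ℝ) * ∑ i, ∑ j, (a α β i j) ^ 2 :=
          mul_le_mul_of_nonneg_left h3 (Nat.cast_nonneg d)
  -- positivity of the Frobenius norm squared
  have hSpos : ∀ α β, 0 < ∑ i, ∑ j, (a α β i j) ^ 2 := by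
    intro α β
    have hSnn : (0:ℝ) ≤ ∑ i, ∑ j, (a α β i j) ^ 2 := by positivity
    rcases hSnn.lt_or_eq with h | h
    · exact h
    · exfalso
      have := hTS α β
      nlinarith [pow_pos (htr α β) 2]
  -- continuity of the integrand
  have hent : ∀ i j, Continuous fun p : 𝒜 × ℬ => a p.1 p.2 i j := fun i j =>
    (continuous_apply j).comp ((continuous_apply i).comp ha)
  have htrc : Continuous fun p : 𝒜 × ℬ => Matrix.trace (a p.1 p.2) := by
    have : (fun p : 𝒜 × ℬ => Matrix.trace (a p.1 p.2))
        = fun p : 𝒜 × ℬ => ∑ i, a p.1 p.2 i i := rfl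
    rw [this]
    exact continuous_finset_sum _ fun i _ => hent i i
  have hSc : Continuous fun p : 𝒜 × ℬ => ∑ i, ∑ j, (a p.1 p.2 i j) ^ 2 :=
    continuous_finset_sum _ fun i _ =>
      continuous_finset_sum _ fun j _ => (hent i j).pow 2
  have hcontG : ∀ M : Matrix (Fin d) (Fin d) ℝ,
      Continuous fun p : 𝒜 × ℬ => Gfun d a f M p.1 p.2 := by
    intro M
    apply Continuous.mul
    · exact htrc.div hSc fun p => (hSpos p.1 p.2).ne'
    · apply Continuous.sub _ hf
      exact continuous_finset_sum _ fun i _ =>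
        continuous_finset_sum _ fun j _ => (hent i j).mul continuous_const
  -- boundedness
  have hbdd : ∀ M : Matrix (Fin d) (Fin d) ℝ, ∃ c C : ℝ,
      (∀ α β, c ≤ Gfun d a f M α β) ∧ (∀ α β, Gfun d a f M α β ≤ C) := by
    intro M
    have hK : IsCompact (Set.range fun p : 𝒜 × ℬ => Gfun d a f M p.1 p.2) :=
      isCompact_range (hcontG M)
    obtain ⟨c, hc⟩ := hK.bddBelow
    obtain ⟨C, hC⟩ := hK.bddAbove
    exact ⟨c, C, fun α β => hc ⟨(α, β), rfl⟩, fun α β => hC ⟨(α, β), rfl⟩⟩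
  -- pointwise Lipschitz bound
  have hpt : ∀ (M N : Matrix (Fin d) (Fin d) ℝ) (α : 𝒜) (β : ℬ),
      |Gfun d a f N α β - Gfun d a f M α β|
        ≤ Real.sqrt d * Real.sqrt (∑ i, ∑ j, ((N - M) i j) ^ 2) := by
    intro M N α β
    have hdiff : Gfun d a f N α β - Gfun d a f M α β
        = (Matrix.trace (a α β) / (∑ i, ∑ j, (a α β i j) ^ 2)) *
            (∑ i, ∑ j, a α β i j * (N - M) i j) := by
      unfold Gfun
      rw [← mul_sub]
      congr 1
      simp only [Matrix.sub_apply, mul_sub, Finset.sum_sub_distrib]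
      ring
    rw [hdiff]
    exact cs_bound d (a α β) (N - M) (htr α β) (hSpos α β) (hTS α β)
  -- √d ≤ 1 + √(d+1)
  have hsd : Real.sqrt d ≤ 1 + Real.sqrt ((d : ℝ) + 1) := by
    have h1 : Real.sqrt d ≤ Real.sqrt ((d : ℝ) + 1) := Real.sqrt_le_sqrt (by linarith)
    linarith
  have hF : ∀ M, Fγ M = ⨅ α : 𝒜, ⨆ β : ℬ, Gfun d a f M α β := hFγ
  -- one-sided estimate
  have main : ∀ M N : Matrix (Fin d) (Fin d) ℝ,
      Fγ N ≤ Fγ M + (1 + Real.sqrt ((d : ℝ) + 1)) *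
        Real.sqrt (∑ i, ∑ j, ((N - M) i j) ^ 2) := by
    intro M N
    rw [hF M, hF N]
    obtain ⟨cN, CN, hcN, hCN⟩ := hbdd N
    obtain ⟨cM, CM, hcM, hCM⟩ := hbdd M
    apply ciInf_ciSup_le_add _ _ _ ⟨cN, hcN⟩ ⟨CN, hCN⟩ ⟨CM, hCM⟩
    intro α β
    have h1 := hpt M N α β
    have h2 : Real.sqrt d * Real.sqrt (∑ i, ∑ j, ((N - M) i j) ^ 2)
        ≤ (1 + Real.sqrt ((d : ℝ) + 1)) * Real.sqrt (∑ i, ∑ j, ((N - M) i j) ^ 2) :=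
      mul_le_mul_of_nonneg_right hsd (Real.sqrt_nonneg _)
    have h3 := abs_le.mp h1
    linarith [h3.2]
  intro M N
  have hsym : (∑ i, ∑ j, ((M - N) i j) ^ 2) = ∑ i, ∑ j, ((N - M) i j) ^ 2 := by
    refine Finset.sum_congr rfl fun i _ => Finset.sum_congr rfl fun j _ => ?_
    rw [Matrix.sub_apply, Matrix.sub_apply]
    ring
  rw [abs_sub_le_iff]
  constructor
  · linarith [main M N]
  · have := main N M
    rw [hsym] at this
    linarith
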